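/- For any vector w ∈ ℝ^n and any s ∈ ℕ with 1 ≤ s ≤ n, the best s-sparse approximation error in ℓ1-norm satisfies inf{‖w - z‖₁ : z is s-sparse} ≤ (1/(4s)) · ‖w‖_{1/2}, where ‖w‖_{1/2} = (Σᵢ |wᵢ|^{1/2})². -/

import Mathlib

noncomputable def l1 {n : ℕ} (v : Fin n → ℝ) : ℝ := ∑ i, |v i|
noncomputable def lHalf {n : ℕ} (v : Fin n → ℝ) : ℝ := (∑ i, Real.sqrt |v i|) ^ 2
def Sparse {n : ℕ} (s : ℕ) (v : Fin n → ℝ) : Prop :=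
  (Finset.univ.filter (fun i => v i ≠ 0)).card ≤ s

lemma exists_top {n : ℕ} (a : Fin n → ℝ) (s : ℕ) (hs : 1 ≤ s) (hsn : s ≤ n) :
    ∃ A : Finset (Fin n), A.card = s ∧ ∀ i ∉ A, ∀ j ∈ A, a i ≤ a j := by
  have hn : 1 ≤ n := le_trans hs hsn
  set σ := Tuple.sort a with hσ
  set m : Fin n := ⟨n - s, by omega⟩ with hm
  refine ⟨(Finset.Ici m).map σ.toEmbedding, ?_, ?_⟩
  · rw [Finset.card_map, Fin.card_Ici]
    simp [hm]; omega
  · intro i hi j hj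
    simp only [Finset.mem_map, Equiv.coe_toEmbedding, Finset.mem_Ici] at hi hj
    obtain ⟨l, hl, rfl⟩ := hj
    have hi' : ¬ m ≤ σ.symm i := by
      intro h; exact hi ⟨σ.symm i, h, by simp⟩
    have : σ.symm i ≤ l := le_of_lt (lt_of_lt_of_le (not_le.mp hi') hl)
    have := Tuple.monotone_sort a this
    rw [← hσ] at this
    simpa using this

theorem stmt0 {n : ℕ} (w : Fin n → ℝ) (s : ℕ) (hs : 1 ≤ s) (hsn : s ≤ n) :
    sInf {t : ℝ | ∃ z : Fin n → ℝ, Sparse s z ∧ t = l1 (w - z)} ≤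
      (1 / (4 * (s : ℝ))) * lHalf w := by
  set a : Fin n → ℝ := fun i => Real.sqrt |w i| with ha
  have ha0 : ∀ i, 0 ≤ a i := fun i => Real.sqrt_nonneg _
  have hasq : ∀ i, a i ^ 2 = |w i| := fun i => Real.sq_sqrt (abs_nonneg _)
  obtain ⟨A, hAcard, hAtop⟩ := exists_top a s hs hsn
  have hAne : A.Nonempty := Finset.card_pos.mp (by omega)
  set z : Fin n → ℝ := fun i => if i ∈ A then w i else 0 with hz
  set S : ℝ := ∑ i, a i with hS
  -- value of l1 (w - z)
  have hval : l1 (w - z) = ∑ i ∈ Finset.univ \ A, a i ^ 2 := by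
    unfold l1
    rw [← Finset.sum_filter_add_sum_filter_not Finset.univ (fun i => i ∈ A)]
    have h1 : ∀ i ∈ Finset.univ.filter (fun i => i ∈ A), |(w - z) i| = 0 := by
      intro i hi; simp only [Finset.mem_filter] at hi
      simp [hz, hi.2]
    rw [Finset.sum_congr rfl h1]
    simp only [Finset.sum_const_zero, zero_add]
    rw [show Finset.univ.filter (fun i => ¬ i ∈ A) = Finset.univ \ A by
      ext i; simp]
    refine Finset.sum_congr rfl fun i hi => ?_
    simp only [Finset.mem_sdiff] at hi
    simp [hz, hi.2, hasq]
  -- membership in the set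
  have hmem : l1 (w - z) ∈ {t : ℝ | ∃ z : Fin n → ℝ, Sparse s z ∧ t = l1 (w - z)} := by
    refine ⟨z, ?_, rfl⟩
    unfold Sparse
    calc (Finset.univ.filter (fun i => z i ≠ 0)).card ≤ A.card := by
          apply Finset.card_le_card
          intro i hi
          simp only [Finset.mem_filter] at hi
          by_contra h
          exact hi.2 (by simp [hz, h])
      _ ≤ s := le_of_eq hAcard
  have hbdd : BddBelow {t : ℝ | ∃ z : Fin n → ℝ, Sparse s z ∧ t = l1 (w - z)} := by
    refine ⟨0, fun t ht => ?_⟩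
    obtain ⟨z', _, rfl⟩ := ht
    exact Finset.sum_nonneg fun i _ => abs_nonneg _
  refine le_trans (csInf_le hbdd hmem) ?_
  rw [hval]
  -- the analytic bound
  have hSw : lHalf w = S ^ 2 := rfl
  rw [hSw]
  set b : ℝ := A.inf' hAne a with hb
  obtain ⟨j0, hj0A, hj0⟩ := Finset.exists_mem_eq_inf' hAne a
  have hb0 : 0 ≤ b := by rw [hb, hj0]; exact ha0 j0
  have hble : ∀ i ∉ A, a i ≤ b := fun i hi => by rw [hb, hj0]; exact hAtop i hi j0 hj0A
  set u : ℝ := ∑ i ∈ Finset.univ \ A, a i with hu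
  have hu0 : 0 ≤ u := Finset.sum_nonneg fun i _ => ha0 i
  have hTle : ∑ i ∈ Finset.univ \ A, a i ^ 2 ≤ b * u := by
    rw [hu, Finset.mul_sum]
    refine Finset.sum_le_sum fun i hi => ?_
    have hi' : i ∉ A := (Finset.mem_sdiff.mp hi).2
    have := hble i hi'
    nlinarith [ha0 i]
  have hsb : (s : ℝ) * b ≤ ∑ i ∈ A, a i := by
    have : ∀ i ∈ A, b ≤ a i := fun i hi => Finset.inf'_le a hi
    calc (s : ℝ) * b = ∑ _i ∈ A, b := by rw [Finset.sum_const, hAcard]; ring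
      _ ≤ ∑ i ∈ A, a i := Finset.sum_le_sum this
  have hsplit : S = ∑ i ∈ A, a i + u := by
    rw [hS, hu, ← Finset.sum_sdiff (Finset.subset_univ A)]; ring
  have hS0 : (s : ℝ) * b + u ≤ S := by rw [hsplit]; linarith
  have hs1 : (1 : ℝ) ≤ (s : ℝ) := by exact_mod_cast hs
  have hsbu0 : 0 ≤ (s : ℝ) * b + u := by positivity
  have hSsq : ((s : ℝ) * b + u) ^ 2 ≤ S ^ 2 := by nlinarith
  rw [div_mul_eq_mul_div, one_mul, le_div_iff₀ (by positivity)]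
  nlinarith [sq_nonneg ((s:ℝ) * b - u), mul_nonneg hb0 hu0]
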